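/- arXiv:1408.0034 — 3 statements merged into one kernel-verified Lean document; each statement's English description precedes it below -/
import Mathlib

section
/- Let n ≥ 2, let ω be a real number such that sin(ωj) ≠ 0 for every integer j with 1 ≤ j ≤ n−1, and let x, x' ∈ ℂ^n (indexed by 0,…,n−1) with x_0 ≠ 0. Suppose that (i) |x_j| = |x'_j| for every 0 ≤ j ≤ n−1, (ii) |x_0 + x_j| = |x'_0 + x'_j| for every 1 ≤ j ≤ n−1, and (iii) |x_0 + e^{iωj} x_j| = |x'_0 + e^{iωj} x'_j| for every 1 ≤ j ≤ n−1. Then there exists a real number θ such that x'_j = e^{iθ} x_j for every j; i.e., these 3n−2 intensity measurements determine x uniquely up to a global phase. -/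
lemma key_lemma (u a b : ℂ) (hu : u ≠ 0) (φ : ℝ) (hφ : Real.sin φ ≠ 0)
    (h1 : ‖a‖ = ‖b‖)
    (h2 : ‖u + a‖ = ‖u + b‖)
    (h3 : ‖u + Complex.exp (Complex.I * φ) * a‖
        = ‖u + Complex.exp (Complex.I * φ) * b‖) :
    a = b := by
  have he : Complex.I * (φ : ℂ) = (φ : ℂ) * Complex.I := by ring
  rw [he] at h3
  set e := Complex.exp ((φ : ℂ) * Complex.I) with hedef
  have her : e.re = Real.cos φ := Complex.exp_ofReal_mul_I_re φ
  have hei : e.im = Real.sin φ := Complex.exp_ofReal_mul_I_im φ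
  have hne : Complex.normSq e = 1 := by
    rw [Complex.normSq_apply, her, hei, ← sq, ← sq]; exact Real.cos_sq_add_sin_sq φ
  have n1 : Complex.normSq a = Complex.normSq b := by
    rw [← Complex.sq_norm, ← Complex.sq_norm, h1]
  have n2 : Complex.normSq (u + a) = Complex.normSq (u + b) := by
    rw [← Complex.sq_norm, ← Complex.sq_norm, h2]
  have n3 : Complex.normSq (u + e * a) = Complex.normSq (u + e * b) := by
    rw [← Complex.sq_norm, ← Complex.sq_norm, h3]
  rw [Complex.normSq_add, Complex.normSq_add] at n2
  rw [Complex.normSq_add, Complex.normSq_add, Complex.normSq_mul, Complex.normSq_mul, hne] at n3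
  have r1 : (u * (starRingEnd ℂ) a).re = (u * (starRingEnd ℂ) b).re := by
    have := n1; linarith
  have r2 : (u * (starRingEnd ℂ) (e * a)).re = (u * (starRingEnd ℂ) (e * b)).re := by
    have := n1; linarith
  set w := u * (starRingEnd ℂ) (a - b) with hwdef
  have hwre : w.re = 0 := by
    have : w = u * (starRingEnd ℂ) a - u * (starRingEnd ℂ) b := by
      rw [hwdef, map_sub]; ring
    rw [this, Complex.sub_re, r1]; ring
  have hwim : w.im = 0 := by
    have hrw : (starRingEnd ℂ) e * w
        = u * (starRingEnd ℂ) (e * a) - u * (starRingEnd ℂ) (e * b) := by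
      simp only [hwdef, map_sub, map_mul]; ring
    have hz : ((starRingEnd ℂ) e * w).re = 0 := by
      rw [hrw, Complex.sub_re, r2]; ring
    rw [Complex.mul_re, Complex.conj_re, Complex.conj_im, her, hei, hwre] at hz
    have : Real.sin φ * w.im = 0 := by linarith
    rcases mul_eq_zero.mp this with h | h
    · exact absurd h hφ
    · exact h
  have hw0 : w = 0 := Complex.ext hwre hwim
  have hcab : (starRingEnd ℂ) (a - b) = 0 := by
    rcases mul_eq_zero.mp (hwdef ▸ hw0) with h | h
    · exact absurd h hu
    · exact h
  have : a - b = 0 := by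
    have := congrArg (starRingEnd ℂ) hcab
    simpa using this
  linear_combination this

/-- Phase retrieval of a non-sparse signal from the `3n-2` deterministic measurements
`|x_j|`, `|x_0 + x_j|`, `|x_0 + e^{iωj} x_j|`: the signal is determined up to a
global phase. -/
theorem stmt0 (n : ℕ) (hn : 2 ≤ n) (ω : ℝ)
    (hω : ∀ j : ℕ, 1 ≤ j → j ≤ n - 1 → Real.sin (ω * j) ≠ 0)
    (x x' : Fin n → ℂ)
    (hx0 : x ⟨0, by omega⟩ ≠ 0)
    (h1 : ∀ j : Fin n, ‖x j‖ = ‖x' j‖)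
    (h2 : ∀ j : Fin n, 1 ≤ (j : ℕ) →
      ‖x ⟨0, by omega⟩ + x j‖ = ‖x' ⟨0, by omega⟩ + x' j‖)
    (h3 : ∀ j : Fin n, 1 ≤ (j : ℕ) →
      ‖x ⟨0, by omega⟩ + Complex.exp (Complex.I * ((ω * (j : ℕ) : ℝ) : ℂ)) * x j‖
        = ‖x' ⟨0, by omega⟩ + Complex.exp (Complex.I * ((ω * (j : ℕ) : ℝ) : ℂ)) * x' j‖) :
    ∃ θ : ℝ, ∀ j : Fin n, x' j = Complex.exp (Complex.I * θ) * x j := by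
  set z0 : Fin n := ⟨0, by omega⟩
  set u := x z0 with hu
  set u' := x' z0 with hu'
  -- the global phase
  set θ : ℝ := u'.arg - u.arg with hθ
  set c : ℂ := Complex.exp (Complex.I * θ) with hc
  have habs : ‖u‖ = ‖u'‖ := h1 z0
  have hu'0 : u' ≠ 0 := by
    intro h
    apply hx0
    have : ‖u‖ = 0 := by rw [habs, h]; simp
    exact norm_eq_zero.mp this
  have hc0 : u' = c * u := by
    have e1 : (‖u'‖ : ℂ) * Complex.exp (u'.arg * Complex.I) = u' :=
      Complex.norm_mul_exp_arg_mul_I u'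
    have e2 : (‖u‖ : ℂ) * Complex.exp (u.arg * Complex.I) = u :=
      Complex.norm_mul_exp_arg_mul_I u
    have habs' : (‖u'‖ : ℂ) ≠ 0 := by
      simpa using hu'0
    have hdiv : u' / u = c := by
      conv_lhs => rw [← e1, ← e2]
      rw [habs, mul_div_mul_left _ _ habs', ← Complex.exp_sub, hc, hθ]
      congr 1
      push_cast
      ring
    rw [← hdiv]
    field_simp
  have hcabs : ‖c‖ = 1 := by
    rw [hc]
    rw [Complex.norm_exp]
    simp
  have hcne : c ≠ 0 := by
    intro h; rw [h] at hcabs; simp at hcabs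
  refine ⟨θ, fun j => ?_⟩
  rcases Nat.eq_zero_or_pos (j : ℕ) with hj0 | hj1
  · have : j = z0 := Fin.ext hj0
    rw [this, ← hu, ← hu', hc0, hc]
  · -- j ≥ 1 case
    have hsin : Real.sin (ω * (j : ℕ)) ≠ 0 := by
      apply hω (j : ℕ) hj1
      have := j.isLt; omega
    -- apply key_lemma with a = x j, b = c⁻¹ * x' j
    have hkey : x j = c⁻¹ * x' j := by
      apply key_lemma u (x j) (c⁻¹ * x' j) hx0 (ω * (j : ℕ)) hsin
      · rw [norm_mul, norm_inv, hcabs]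
        simpa using h1 j
      · have := h2 j hj1
        have hr : u + c⁻¹ * x' j = c⁻¹ * (u' + x' j) := by
          rw [hc0]; field_simp
        rw [hr, norm_mul, norm_inv, hcabs]
        simpa using this
      · have := h3 j hj1
        have hr : u + Complex.exp (Complex.I * ((ω * (j : ℕ) : ℝ) : ℂ)) * (c⁻¹ * x' j)
            = c⁻¹ * (u' + Complex.exp (Complex.I * ((ω * (j : ℕ) : ℝ) : ℂ)) * x' j) := by
          rw [hc0]; field_simp
        rw [hr, norm_mul, norm_inv, hcabs]
        simpa using this
    rw [hkey, ← mul_assoc, mul_inv_cancel₀ hcne, one_mul]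
end

section
/- Let ω be a real number with sin ω ≠ 0, and let u, v, u', v' ∈ ℂ with u ≠ 0. If |u| = |u'|, |v| = |v'|, |u + v| = |u' + v'|, and |u + e^{iω} v| = |u' + e^{iω} v'|, then there exists a real number θ such that u' = e^{iθ} u and v' = e^{iθ} v. -/
/-- Two-component phase recovery: the magnitudes `|u|, |v|, |u+v|` together with the
rotated measurement `|u + e^{iω} v|` (with `sin ω ≠ 0`, `u ≠ 0`) determine the pair
`(u,v)` up to a common global phase. -/
theorem stmt1 (ω : ℝ) (hω : Real.sin ω ≠ 0) (u v u' v' : ℂ) (hu : u ≠ 0)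
    (h1 : ‖u‖ = ‖u'‖)
    (h2 : ‖v‖ = ‖v'‖)
    (h3 : ‖u + v‖ = ‖u' + v'‖)
    (h4 : ‖u + Complex.exp (Complex.I * ω) * v‖
        = ‖u' + Complex.exp (Complex.I * ω) * v'‖) :
    ∃ θ : ℝ, u' = Complex.exp (Complex.I * θ) * u ∧ v' = Complex.exp (Complex.I * θ) * v := by
  set m : ℂ := Complex.exp (Complex.I * ω) with hm
  have hmre : m.re = Real.cos ω := by
    rw [hm, mul_comm, Complex.exp_ofReal_mul_I_re]
  have hmim : m.im = Real.sin ω := by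
    rw [hm, mul_comm, Complex.exp_ofReal_mul_I_im]
  have hmns : Complex.normSq m = 1 := by
    have : ‖m‖ = 1 := by
      rw [hm, Complex.norm_exp]; simp
    rw [Complex.normSq_eq_norm_sq, this, one_pow]
  obtain ⟨θ, hθ⟩ := (Complex.norm_eq_one_iff _).mp (show ‖u'/u‖ = 1 by
    rw [norm_div, ← h1, div_self (norm_ne_zero_iff.mpr hu)])
  have hE : u' = Complex.exp (Complex.I * θ) * u := by
    rw [mul_comm Complex.I (θ:ℂ), hθ]; field_simp
  -- normSq equalities
  have e1 : Complex.normSq u = Complex.normSq u' := by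
    rw [← Complex.sq_norm, ← Complex.sq_norm, h1]
  have e2 : Complex.normSq v = Complex.normSq v' := by
    rw [← Complex.sq_norm, ← Complex.sq_norm, h2]
  have e3 : (u * starRingEnd ℂ v).re = (u' * starRingEnd ℂ v').re := by
    have := congrArg (fun x => x ^ 2) h3
    simp only [Complex.sq_norm, Complex.normSq_add] at this
    linarith
  have e4 : (u * starRingEnd ℂ (m * v)).re = (u' * starRingEnd ℂ (m * v')).re := by
    have := congrArg (fun x => x ^ 2) h4
    simp only [Complex.sq_norm, Complex.normSq_add, Complex.normSq_mul, hmns, one_mul] at this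
    linarith
  have e4' : Real.cos ω * (u * starRingEnd ℂ v).re + Real.sin ω * (u * starRingEnd ℂ v).im
      = Real.cos ω * (u' * starRingEnd ℂ v').re + Real.sin ω * (u' * starRingEnd ℂ v').im := by
    simp only [map_mul, Complex.mul_re, Complex.mul_im, Complex.conj_re, Complex.conj_im,
      hmre, hmim] at e4
    simp only [Complex.mul_re, Complex.mul_im, Complex.conj_re, Complex.conj_im]
    linear_combination e4
  have eim : (u * starRingEnd ℂ v).im = (u' * starRingEnd ℂ v').im := by
    have h := e4'
    rw [e3] at h
    have := mul_left_cancel₀ hω (by linarith : Real.sin ω * (u * starRingEnd ℂ v).im = Real.sin ω * (u' * starRingEnd ℂ v').im)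
    exact this
  have key : u * starRingEnd ℂ v = u' * starRingEnd ℂ v' := Complex.ext e3 eim
  have key2 : starRingEnd ℂ u * v = starRingEnd ℂ u' * v' := by
    have := congrArg (starRingEnd ℂ) key
    simpa [map_mul] using this
  refine ⟨θ, hE, ?_⟩
  set E : ℂ := Complex.exp (Complex.I * θ) with hEdef
  have hcE : starRingEnd ℂ E * E = 1 := by
    rw [hEdef, ← Complex.exp_conj]
    rw [← Complex.exp_add]
    simp [Complex.exp_zero]
  rw [hE, map_mul] at key2
  have hcu : starRingEnd ℂ u ≠ 0 := by simpa using hu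
  have : v = starRingEnd ℂ E * v' := by
    apply mul_left_cancel₀ hcu
    rw [key2]; ring
  calc v' = (starRingEnd ℂ E * E) * v' := by rw [hcE, one_mul]
    _ = E * (starRingEnd ℂ E * v') := by ring
    _ = E * v := by rw [← this]
end

section
/- Let d ≥ 3 be an integer and λ > 0 a real number satisfying (d−1)·λ·e^{−λ} > 1, and define f(t) = (1 + e^{−λ} − e^{−λt})^{d−1}. Then the equation f(t) = t has exactly two solutions in [0,1]: the point t = 1 and a unique point t* ∈ (0,1). Moreover, f(t) < t for all t ∈ (t*, 1). -/
open Real Set Filter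

set_option maxHeartbeats 1000000 in
/-- The density-evolution map `f(t) = (1 + e^{-λ} - e^{-λt})^{d-1}` has exactly two
fixed points in `[0,1]`: `t = 1` and a unique `t* ∈ (0,1)`, and `f(t) < t` on `(t*, 1)`. -/
theorem stmt3 (d : ℕ) (hd : 3 ≤ d) (lam : ℝ) (hlam : 0 < lam)
    (hcond : ((d : ℝ) - 1) * lam * Real.exp (-lam) > 1) :
    ∃ tstar : ℝ, tstar ∈ Set.Ioo (0 : ℝ) 1 ∧
      (∀ t ∈ Set.Icc (0 : ℝ) 1,
        ((1 + Real.exp (-lam) - Real.exp (-lam * t)) ^ (d - 1) = t ↔ (t = tstar ∨ t = 1))) ∧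
      (∀ t ∈ Set.Ioo tstar 1, (1 + Real.exp (-lam) - Real.exp (-lam * t)) ^ (d - 1) < t) := by
  have hdcast : ((d - 1 : ℕ) : ℝ) = (d : ℝ) - 1 := by
    have h1 : (1:ℕ) ≤ d := by omega
    push_cast [h1]; ring
  set b : ℝ → ℝ := fun t => 1 + Real.exp (-lam) - Real.exp (-lam * t) with hbdef
  set φ : ℝ → ℝ := fun t => b t ^ (d - 1) - t with hφdef
  set φ' : ℝ → ℝ := fun t =>
    ((d - 1 : ℕ) : ℝ) * b t ^ (d - 2) * (lam * Real.exp (-lam * t)) - 1 with hφ'def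
  set L : ℝ → ℝ := fun t => -lam * t + ((d - 2 : ℕ) : ℝ) * Real.log (b t) with hLdef
  set L' : ℝ → ℝ := fun t =>
    -lam + ((d - 2 : ℕ) : ℝ) * (lam * Real.exp (-lam * t) / b t) with hL'def
  set m : ℝ := -Real.log (((d - 1 : ℕ) : ℝ) * lam) with hmdef
  have hd1pos : (0:ℝ) < ((d - 1 : ℕ) : ℝ) := by
    have : 0 < d - 1 := by omega
    exact_mod_cast this
  have hd2pos : (0:ℝ) < ((d - 2 : ℕ) : ℝ) := by
    have : 0 < d - 2 := by omega
    exact_mod_cast this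
  have hcpos : 0 < ((d - 1 : ℕ) : ℝ) * lam := mul_pos hd1pos hlam
  -- basic facts about b
  have hbpos : ∀ t : ℝ, 0 ≤ t → 0 < b t := by
    intro t ht
    have h1 : Real.exp (-lam * t) ≤ 1 := by
      rw [Real.exp_le_one_iff]; nlinarith
    have h2 := Real.exp_pos (-lam)
    simp only [hbdef]; linarith
  have hbmono : ∀ s t : ℝ, s < t → b s < b t := by
    intro s t hst
    have : Real.exp (-lam * t) < Real.exp (-lam * s) := by
      apply Real.exp_lt_exp.mpr; nlinarith
    simp only [hbdef]; linarith
  have hb1 : b 1 = 1 := by simp only [hbdef]; rw [mul_one]; ring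
  have hb0 : b 0 = Real.exp (-lam) := by simp only [hbdef]; norm_num
  -- derivatives
  have hderivb : ∀ t : ℝ, HasDerivAt b (lam * Real.exp (-lam * t)) t := by
    intro t
    have h1 : HasDerivAt (fun u : ℝ => -lam * u) (-lam) t := by
      simpa using (hasDerivAt_id t).const_mul (-lam)
    have h2 := h1.exp
    have h3 := (hasDerivAt_const t (1 + Real.exp (-lam))).sub h2
    exact h3.congr_deriv (by ring)
  have hderivφ : ∀ t : ℝ, HasDerivAt φ (φ' t) t := by
    intro t
    have h4 := (hderivb t).pow (d - 1)
    have h5 := h4.sub (hasDerivAt_id' t)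
    have he : d - 1 - 1 = d - 2 := by omega
    rw [he] at h5
    exact h5
  have hderivL : ∀ t ∈ Icc (0:ℝ) 1, HasDerivAt L (L' t) t := by
    intro t ht
    have hb := hbpos t ht.1
    have h1 : HasDerivAt (fun u : ℝ => -lam * u) (-lam) t := by
      simpa using (hasDerivAt_id t).const_mul (-lam)
    have h2 := ((hderivb t).log (ne_of_gt hb)).const_mul ((d - 2 : ℕ) : ℝ)
    exact h1.add h2
  have hφcont : Continuous φ := by
    apply Continuous.sub _ continuous_id
    apply Continuous.pow
    exact (continuous_const.sub ((continuous_const.mul continuous_id).rexp))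
  have hLcont : ContinuousOn L (Icc 0 1) :=
    fun t ht => ((hderivL t ht).continuousAt).continuousWithinAt
  -- exp(L) relation
  have hexpL : ∀ t ∈ Icc (0:ℝ) 1,
      φ' t = (((d - 1 : ℕ) : ℝ) * lam) * Real.exp (L t) - 1 := by
    intro t ht
    have hb := hbpos t ht.1
    have h1 : Real.exp (((d - 2 : ℕ) : ℝ) * Real.log (b t)) = b t ^ (d - 2) := by
      rw [Real.exp_nat_mul, Real.exp_log hb]
    simp only [hφ'def, hLdef, Real.exp_add, h1]
    ring
  -- exp lam < (d-1) lam
  have hclam : Real.exp lam < ((d - 1 : ℕ) : ℝ) * lam := by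
    rw [hdcast]
    have hp := Real.exp_pos lam
    have h := hcond
    rw [Real.exp_neg, gt_iff_lt, ← div_eq_mul_inv, lt_div_iff₀ hp, one_mul] at h
    linarith
  have hL1 : L 1 = -lam := by simp [hLdef, hb1]
  have hL1m : m < L 1 := by
    rw [hL1, hmdef, neg_lt_neg_iff]
    exact (Real.lt_log_iff_exp_lt hcpos).mpr hclam
  -- translations between φ' and L
  have hexpm : Real.exp m = 1 / (((d - 1 : ℕ) : ℝ) * lam) := by
    rw [hmdef, Real.exp_neg, Real.exp_log hcpos, inv_eq_one_div]
  have hforward : ∀ t ∈ Icc (0:ℝ) 1, 0 ≤ φ' t → m ≤ L t := by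
    intro t ht h
    rw [hexpL t ht] at h
    have h2 : Real.exp m ≤ Real.exp (L t) := by
      rw [hexpm, div_le_iff₀ hcpos]; nlinarith
    exact Real.exp_le_exp.mp h2
  have hback : ∀ t ∈ Icc (0:ℝ) 1, m < L t → 0 < φ' t := by
    intro t ht h
    rw [hexpL t ht]
    have h2 : Real.exp m < Real.exp (L t) := Real.exp_lt_exp.mpr h
    rw [hexpm, div_lt_iff₀ hcpos] at h2
    nlinarith
  -- L' strictly decreasing on [0,∞)
  have hL'anti : ∀ s t : ℝ, 0 ≤ s → s < t → L' t < L' s := by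
    intro s t hs hst
    have hbs := hbpos s hs
    have hbt := hbpos t (by linarith)
    have hEst : Real.exp (-lam * t) < Real.exp (-lam * s) := by
      apply Real.exp_lt_exp.mpr; nlinarith
    have hEt := Real.exp_pos (-lam * t)
    have hbst := hbmono s t hst
    have hfrac : lam * Real.exp (-lam * t) / b t < lam * Real.exp (-lam * s) / b s := by
      rw [div_lt_div_iff₀ hbt hbs]
      have k1 : Real.exp (-lam * t) * b s < Real.exp (-lam * s) * b s :=
        mul_lt_mul_of_pos_right hEst hbs
      have k2 : Real.exp (-lam * s) * b s < Real.exp (-lam * s) * b t :=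
        mul_lt_mul_of_pos_left hbst (Real.exp_pos _)
      nlinarith [mul_lt_mul_of_pos_left (lt_trans k1 k2) hlam]
    simp only [hL'def]
    nlinarith
  -- Claim K
  have hK : ∀ s t : ℝ, 0 ≤ s → s < t → t ≤ 1 → 0 ≤ φ' s → 0 < φ' t := by
    intro s t hs hst ht1 hφs
    have hsI : s ∈ Icc (0:ℝ) 1 := ⟨hs, le_of_lt (lt_of_lt_of_le hst ht1)⟩
    have htI : t ∈ Icc (0:ℝ) 1 := ⟨le_trans hs hst.le, ht1⟩
    have hLs : m ≤ L s := hforward s hsI hφs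
    apply hback t htI
    rcases eq_or_lt_of_le ht1 with rfl | ht1'
    · exact hL1m
    · by_contra hcon; push_neg at hcon
      obtain ⟨c1, hc1, hc1'⟩ := exists_hasDerivAt_eq_slope L L' hst
        (hLcont.mono (Icc_subset_Icc hs ht1))
        (fun x hx => hderivL x ⟨le_trans hs hx.1.le, le_trans hx.2.le ht1⟩)
      have h1 : L' c1 ≤ 0 := by
        rw [hc1']
        apply div_nonpos_of_nonpos_of_nonneg <;> linarith
      obtain ⟨c2, hc2, hc2'⟩ := exists_hasDerivAt_eq_slope L L' ht1'
        (hLcont.mono (Icc_subset_Icc (le_trans hs hst.le) le_rfl))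
        (fun x hx => hderivL x ⟨le_trans (le_trans hs hst.le) hx.1.le, hx.2.le⟩)
      have h2 : 0 < L' c2 := by
        rw [hc2']
        apply div_pos
        · linarith [hL1m]
        · linarith
      have := hL'anti c1 c2 (le_trans hs hc1.1.le) (lt_trans hc1.2 hc2.1)
      linarith
  -- φ values at endpoints
  have hφ1 : φ 1 = 0 := by simp [hφdef, hb1]
  have hφ0 : 0 < φ 0 := by
    have := Real.exp_pos (-lam)
    simp only [hφdef, hb0, sub_zero]
    positivity
  have hφ'1 : 0 < φ' 1 := by
    simp only [hφ'def, hb1, one_pow, mul_one, hdcast]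
    have h := hcond
    rw [mul_assoc] at h
    linarith
  -- negativity of φ just left of 1
  have hneg : ∀ u : ℝ, u < 1 → ∃ w, u < w ∧ w < 1 ∧ φ w < 0 := by
    intro u hu
    have hder := hderivφ 1
    rw [hasDerivAt_iff_tendsto_slope] at hder
    have hpos : ∀ᶠ x in nhdsWithin (1:ℝ) {(1:ℝ)}ᶜ, 0 < slope φ 1 x :=
      hder.eventually (eventually_gt_nhds hφ'1)
    have hmono : nhdsWithin (1:ℝ) (Iio 1) ≤ nhdsWithin (1:ℝ) {(1:ℝ)}ᶜ :=
      nhdsWithin_mono 1 (fun x hx => ne_of_lt hx)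
    have hlt : ∀ᶠ x in nhdsWithin (1:ℝ) (Iio 1), 0 < slope φ 1 x := hpos.filter_mono hmono
    have hmem : Ioo u 1 ∈ nhdsWithin (1:ℝ) (Iio 1) :=
      Ioo_mem_nhdsLT hu
    obtain ⟨w, hw1, hw2⟩ := (hlt.and (eventually_of_mem hmem (fun x hx => hx))).exists
    refine ⟨w, hw2.1, hw2.2, ?_⟩
    by_contra hcon; push_neg at hcon
    have : slope φ 1 w ≤ 0 := by
      rw [slope_def_field, hφ1]
      apply div_nonpos_of_nonneg_of_nonpos
      · linarith
      · linarith [hw2.2]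
    linarith
  -- Claim M
  have hM : ∀ s t : ℝ, 0 ≤ s → φ s ≤ 0 → s < t → t < 1 → φ t < 0 := by
    intro s t hs hφs hst ht1
    by_contra hcon; push_neg at hcon
    obtain ⟨w, hw1, hw2, hw3⟩ := hneg t ht1
    obtain ⟨c1, hc1, hc1'⟩ := exists_hasDerivAt_eq_slope φ φ' hst
      hφcont.continuousOn (fun x _ => hderivφ x)
    have h1 : 0 ≤ φ' c1 := by
      rw [hc1']; apply div_nonneg <;> linarith
    obtain ⟨c2, hc2, hc2'⟩ := exists_hasDerivAt_eq_slope φ φ' hw1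
      hφcont.continuousOn (fun x _ => hderivφ x)
    have h2 : φ' c2 < 0 := by
      rw [hc2']; apply div_neg_of_neg_of_pos <;> linarith
    have := hK c1 c2 (le_trans hs hc1.1.le) (lt_trans hc1.2 hc2.1)
      (by linarith [hc2.2] : c2 ≤ 1) h1
    linarith
  -- existence of the interior fixed point
  obtain ⟨w, hw0, hw1, hwneg⟩ := hneg 0 one_pos
  have hIVT := intermediate_value_Ioo' (le_of_lt hw0) hφcont.continuousOn
  have h0mem : (0:ℝ) ∈ Ioo (φ w) (φ 0) := ⟨hwneg, hφ0⟩
  obtain ⟨tstar, hts, htsφ⟩ := hIVT h0mem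
  have htsI : tstar ∈ Ioo (0:ℝ) 1 := ⟨hts.1, lt_trans hts.2 hw1⟩
  refine ⟨tstar, htsI, ?_, ?_⟩
  · intro t ht
    have hbt : (1 + Real.exp (-lam) - Real.exp (-lam * t)) = b t := rfl
    rw [hbt]
    constructor
    · intro hft
      have hφt : φ t = 0 := by simp only [hφdef]; rw [hft]; ring
      rcases eq_or_lt_of_le ht.2 with h1 | h1
      · right; exact h1
      · left
        rcases lt_trichotomy t tstar with h2 | h2 | h2
        · exfalso
          have := hM t tstar ht.1 (le_of_eq hφt) h2 htsI.2
          linarith [htsφ]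
        · exact h2
        · exfalso
          have := hM tstar t (le_of_lt htsI.1) htsφ.le h2 h1
          linarith [hφt, this]
    · rintro (rfl | rfl)
      · have h := htsφ
        simp only [hφdef] at h
        linarith
      · have h := hφ1
        simp only [hφdef] at h
        linarith
  · intro t ht
    have hbt : (1 + Real.exp (-lam) - Real.exp (-lam * t)) = b t := rfl
    rw [hbt]
    have := hM tstar t (le_of_lt htsI.1) htsφ.le ht.1 ht.2
    simp only [hφdef] at this
    linarith
end
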